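/- For bounding boxes (represented as finite measurable sets of positive measure, e.g., axis-aligned rectangles in the plane), the function d(x,y) = 1 - IoU(x,y), where IoU(x,y) = |x ∩ y| / |x ∪ y| is the Jaccard index with respect to Lebesgue measure (with the convention IoU(x,y)=1 if |x ∪ y| = 0), satisfies the triangle inequality: d(x,y) ≤ d(x,z) + d(z,y). -/

import Mathlib

open MeasureTheory

/-- Intersection-over-union (Jaccard index) of two sets w.r.t. a measure,
with the convention that `IoU x y = 1` when the union is null. -/
noncomputable def IoU (μ : Measure (ℝ × ℝ)) (x y : Set (ℝ × ℝ)) : ℝ :=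
  if μ (x ∪ y) = 0 then 1 else (μ (x ∩ y)).toReal / (μ (x ∪ y)).toReal

lemma jaccard_real (a b c d e f g : ℝ) (ha : 0 ≤ a) (hb : 0 ≤ b) (hc : 0 ≤ c)
    (hd : 0 ≤ d) (he : 0 ≤ e) (hf : 0 ≤ f) (hg : 0 ≤ g)
    (h1 : 0 < a+b+c+d+e+f) (h2 : 0 < a+b+c+d+e+g) (h3 : 0 < a+b+c+d+f+g) :
    1 - (a+b)/(a+b+c+d+e+f) ≤ (1 - (a+c)/(a+b+c+d+e+g)) + (1 - (a+d)/(a+b+c+d+f+g)) := by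
  have hV : 0 < a+b+c+d+e+f+g := by linarith
  have t1 : (b+d+e+g)/(a+b+c+d+e+f+g) ≤ (b+d+e+g)/(a+b+c+d+e+g) :=
    div_le_div_of_nonneg_left (by linarith) h2 (by linarith)
  have t2 : (b+c+f+g)/(a+b+c+d+e+f+g) ≤ (b+c+f+g)/(a+b+c+d+f+g) :=
    div_le_div_of_nonneg_left (by linarith) h3 (by linarith)
  have t0 : (c+d+e+f)/(a+b+c+d+e+f)
      ≤ (b+d+e+g)/(a+b+c+d+e+f+g) + (b+c+f+g)/(a+b+c+d+e+f+g) := by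
    rw [← add_div, div_le_div_iff₀ h1 hV]
    nlinarith [mul_nonneg hg (le_of_lt h1), mul_nonneg hb (le_of_lt h1)]
  have e1 : 1 - (a+b)/(a+b+c+d+e+f) = (c+d+e+f)/(a+b+c+d+e+f) := by
    field_simp; ring
  have e2 : 1 - (a+c)/(a+b+c+d+e+g) = (b+d+e+g)/(a+b+c+d+e+g) := by
    field_simp; ring
  have e3 : 1 - (a+d)/(a+b+c+d+f+g) = (b+c+f+g)/(a+b+c+d+f+g) := by
    field_simp; ring
  rw [e1, e2, e3]; linarith

/-- The Jaccard distance `1 - IoU` satisfies the triangle inequality on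
measurable sets of finite positive measure. -/
theorem jaccard_triangle
    (x y z : Set (ℝ × ℝ))
    (hx : MeasurableSet x) (hy : MeasurableSet y) (hz : MeasurableSet z)
    (hxf : volume x < ⊤) (hyf : volume y < ⊤) (hzf : volume z < ⊤)
    (hxp : 0 < volume x) (hyp : 0 < volume y) (hzp : 0 < volume z) :
    1 - IoU volume x y ≤ (1 - IoU volume x z) + (1 - IoU volume z y) := by
  set μ : Measure (ℝ × ℝ) := volume with hμ
  -- atoms
  set a := (μ (x ∩ y ∩ z)).toReal with hadef
  set b := (μ ((x ∩ y) \ z)).toReal with hbdef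
  set c := (μ ((x ∩ z) \ y)).toReal with hcdef
  set d := (μ ((y ∩ z) \ x)).toReal with hddef
  set e := (μ (x \ (y ∪ z))).toReal with hedef
  set f := (μ (y \ (x ∪ z))).toReal with hfdef
  set g := (μ (z \ (x ∪ y))).toReal with hgdef
  have ha : 0 ≤ a := ENNReal.toReal_nonneg
  have hb : 0 ≤ b := ENNReal.toReal_nonneg
  have hc : 0 ≤ c := ENNReal.toReal_nonneg
  have hd : 0 ≤ d := ENNReal.toReal_nonneg
  have he : 0 ≤ e := ENNReal.toReal_nonneg
  have hf : 0 ≤ f := ENNReal.toReal_nonneg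
  have hg : 0 ≤ g := ENNReal.toReal_nonneg
  -- finiteness of atoms
  have finA : μ (x ∩ y ∩ z) ≠ ⊤ :=
    (lt_of_le_of_lt (measure_mono (by intro p hp; exact hp.1.1)) hxf).ne
  have finB : μ ((x ∩ y) \ z) ≠ ⊤ :=
    (lt_of_le_of_lt (measure_mono (by intro p hp; exact hp.1.1)) hxf).ne
  have finC : μ ((x ∩ z) \ y) ≠ ⊤ :=
    (lt_of_le_of_lt (measure_mono (by intro p hp; exact hp.1.1)) hxf).ne
  have finD : μ ((y ∩ z) \ x) ≠ ⊤ :=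
    (lt_of_le_of_lt (measure_mono (by intro p hp; exact hp.1.1)) hyf).ne
  have finE : μ (x \ (y ∪ z)) ≠ ⊤ :=
    (lt_of_le_of_lt (measure_mono (by intro p hp; exact hp.1)) hxf).ne
  have finF : μ (y \ (x ∪ z)) ≠ ⊤ :=
    (lt_of_le_of_lt (measure_mono (by intro p hp; exact hp.1)) hyf).ne
  have finG : μ (z \ (x ∪ y)) ≠ ⊤ :=
    (lt_of_le_of_lt (measure_mono (by intro p hp; exact hp.1)) hzf).ne
  -- intersections in terms of atoms
  have hxy : (μ (x ∩ y)).toReal = a + b := by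
    rw [← measure_inter_add_diff (x ∩ y) hz, ENNReal.toReal_add finA finB]
  have hxz : (μ (x ∩ z)).toReal = a + c := by
    have hs : (x ∩ z) ∩ y = x ∩ y ∩ z := by ext p; simp [Set.mem_inter_iff]; tauto
    rw [← measure_inter_add_diff (x ∩ z) hy, hs, ENNReal.toReal_add finA finC]
  have hzy : (μ (z ∩ y)).toReal = a + d := by
    have hs : (z ∩ y) ∩ x = x ∩ y ∩ z := by ext p; simp [Set.mem_inter_iff]; tauto
    have hs2 : (z ∩ y) \ x = (y ∩ z) \ x := by ext p; simp [Set.mem_inter_iff]; tauto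
    rw [← measure_inter_add_diff (z ∩ y) hx, hs, hs2, ENNReal.toReal_add finA finD]
  -- whole sets in terms of atoms
  have hX : (μ x).toReal = a + b + c + e := by
    have h1 : (x \ y) ∩ z = (x ∩ z) \ y := by ext p; simp; tauto
    have h2 : (x \ y) \ z = x \ (y ∪ z) := by ext p; simp; tauto
    have hd1 : μ (x \ y) = μ ((x ∩ z) \ y) + μ (x \ (y ∪ z)) := by
      rw [← measure_inter_add_diff (x \ y) hz, h1, h2]
    have hfinxy : μ (x ∩ y) ≠ ⊤ :=
      (lt_of_le_of_lt (measure_mono (fun p hp => hp.1)) hxf).ne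
    have hfinxdy : μ (x \ y) ≠ ⊤ :=
      (lt_of_le_of_lt (measure_mono (fun p hp => hp.1)) hxf).ne
    rw [← measure_inter_add_diff x hy, ENNReal.toReal_add hfinxy hfinxdy, hxy, hd1,
      ENNReal.toReal_add finC finE]
    ring
  have hY : (μ y).toReal = a + b + d + f := by
    have h0 : y ∩ x = x ∩ y := Set.inter_comm y x
    have h1 : (y \ x) ∩ z = (y ∩ z) \ x := by ext p; simp; tauto
    have h2 : (y \ x) \ z = y \ (x ∪ z) := by ext p; simp; tauto
    have hd1 : μ (y \ x) = μ ((y ∩ z) \ x) + μ (y \ (x ∪ z)) := by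
      rw [← measure_inter_add_diff (y \ x) hz, h1, h2]
    have hfinyx : μ (y ∩ x) ≠ ⊤ :=
      (lt_of_le_of_lt (measure_mono (fun p hp => hp.1)) hyf).ne
    have hfinydx : μ (y \ x) ≠ ⊤ :=
      (lt_of_le_of_lt (measure_mono (fun p hp => hp.1)) hyf).ne
    rw [← measure_inter_add_diff y hx, ENNReal.toReal_add hfinyx hfinydx, h0, hxy, hd1,
      ENNReal.toReal_add finD finF]
    ring
  have hZ : (μ z).toReal = a + c + d + g := by
    have h0 : z ∩ x = x ∩ z := Set.inter_comm z x
    have h1 : (z \ x) ∩ y = (y ∩ z) \ x := by ext p; simp; tauto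
    have h2 : (z \ x) \ y = z \ (x ∪ y) := by ext p; simp; tauto
    have hd1 : μ (z \ x) = μ ((y ∩ z) \ x) + μ (z \ (x ∪ y)) := by
      rw [← measure_inter_add_diff (z \ x) hy, h1, h2]
    have hfinzx : μ (z ∩ x) ≠ ⊤ :=
      (lt_of_le_of_lt (measure_mono (fun p hp => hp.1)) hzf).ne
    have hfinzdx : μ (z \ x) ≠ ⊤ :=
      (lt_of_le_of_lt (measure_mono (fun p hp => hp.1)) hzf).ne
    rw [← measure_inter_add_diff z hx, ENNReal.toReal_add hfinzx hfinzdx, h0, hxz, hd1,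
      ENNReal.toReal_add finD finG]
    ring
  -- unions
  have union_fin : ∀ s t : Set (ℝ × ℝ), μ s < ⊤ → μ t < ⊤ → μ (s ∪ t) ≠ ⊤ := by
    intro s t hs ht
    exact (lt_of_le_of_lt (measure_union_le s t) (ENNReal.add_lt_top.2 ⟨hs, ht⟩)).ne
  have inter_fin : ∀ s t : Set (ℝ × ℝ), μ s < ⊤ → μ (s ∩ t) ≠ ⊤ := by
    intro s t hs
    exact (lt_of_le_of_lt (measure_mono (fun p hp => hp.1)) hs).ne
  have hUxy : (μ (x ∪ y)).toReal = a + b + c + d + e + f := by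
    have h := measure_union_add_inter (μ := μ) x hy
    have h' := congrArg ENNReal.toReal h
    rw [ENNReal.toReal_add (union_fin x y hxf hyf) (inter_fin x y hxf),
      ENNReal.toReal_add hxf.ne hyf.ne, hxy, hX, hY] at h'
    linarith
  have hUxz : (μ (x ∪ z)).toReal = a + b + c + d + e + g := by
    have h := measure_union_add_inter (μ := μ) x hz
    have h' := congrArg ENNReal.toReal h
    rw [ENNReal.toReal_add (union_fin x z hxf hzf) (inter_fin x z hxf),
      ENNReal.toReal_add hxf.ne hzf.ne, hxz, hX, hZ] at h'
    linarith
  have hUzy : (μ (z ∪ y)).toReal = a + b + c + d + f + g := by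
    have h := measure_union_add_inter (μ := μ) z hy
    have h' := congrArg ENNReal.toReal h
    rw [ENNReal.toReal_add (union_fin z y hzf hyf) (inter_fin z y hzf),
      ENNReal.toReal_add hzf.ne hyf.ne, hzy, hZ, hY] at h'
    linarith
  -- nonvanishing of unions
  have hUxy0 : μ (x ∪ y) ≠ 0 :=
    fun h0 => (lt_of_lt_of_le hxp (measure_mono Set.subset_union_left)).ne' (by rw [h0])
  have hUxz0 : μ (x ∪ z) ≠ 0 :=
    fun h0 => (lt_of_lt_of_le hxp (measure_mono Set.subset_union_left)).ne' (by rw [h0])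
  have hUzy0 : μ (z ∪ y) ≠ 0 :=
    fun h0 => (lt_of_lt_of_le hzp (measure_mono Set.subset_union_left)).ne' (by rw [h0])
  have pUxy : (0:ℝ) < a + b + c + d + e + f := by
    rw [← hUxy]; exact ENNReal.toReal_pos hUxy0 (union_fin x y hxf hyf)
  have pUxz : (0:ℝ) < a + b + c + d + e + g := by
    rw [← hUxz]; exact ENNReal.toReal_pos hUxz0 (union_fin x z hxf hzf)
  have pUzy : (0:ℝ) < a + b + c + d + f + g := by
    rw [← hUzy]; exact ENNReal.toReal_pos hUzy0 (union_fin z y hzf hyf)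
  rw [IoU, IoU, IoU, if_neg hUxy0, if_neg hUxz0, if_neg hUzy0, hxy, hxz, hzy, hUxy, hUxz, hUzy]
  exact jaccard_real a b c d e f g ha hb hc hd he hf hg pUxy pUxz pUzy
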